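/- arXiv:1502.02490 — 2 statements merged into one kernel-verified Lean document; each statement's English description precedes it below -/
import Mathlib

section
/- Let F: ℝ → ℝ be C² and let β_ξ be the standard smooth convex approximation of the absolute value at scale ξ > 0 (so |β_ξ'| ≤ 1 and β_ξ'(s) = sgn(s) for |s| ≥ ξ). Define F^{β_ξ}(a,b) := ∫_b^a β_ξ'(σ − b) F'(σ) dσ. Then for all u, v ∈ ℝ, |∂_v( F^{β_ξ}(u,v) − F^{β_ξ}(v,u) )| ≤ M₂ ξ ‖F''‖_∞, where M₂ = sup |β''|. -/
open intervalIntegral MeasureTheory Set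

lemma core_est (φ : ℝ → ℝ) (hφc : Continuous φ) (M₂ ξ C : ℝ) (hξ : 0 < ξ) (hM₂ : 0 ≤ M₂)
    (hC : 0 ≤ C)
    (hlip : ∀ a b : ℝ, |φ b - φ a| ≤ M₂ / ξ * |b - a|)
    (hone : ∀ s : ℝ, ξ ≤ s → φ s = 1)
    (g : ℝ → ℝ) (hg : Continuous g) (hgb : ∀ x, |g x| ≤ C)
    (a b : ℝ) (hab : a ≤ b) :
    |∫ σ in a..b, (φ (σ - a) - φ (b - a)) * g σ| ≤ M₂ * ξ * C := by
  set c := min b (a + ξ) with hc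
  have hac : a ≤ c := le_min hab (by linarith)
  have hcb : c ≤ b := min_le_left _ _
  have hcξ : c - a ≤ ξ := by
    have := min_le_right b (a + ξ); linarith
  have hcont : Continuous fun σ => (φ (σ - a) - φ (b - a)) * g σ :=
    ((hφc.comp (continuous_id.sub continuous_const)).sub continuous_const).mul hg
  have hsplit : (∫ σ in a..b, (φ (σ - a) - φ (b - a)) * g σ)
      = (∫ σ in a..c, (φ (σ - a) - φ (b - a)) * g σ)
        + ∫ σ in c..b, (φ (σ - a) - φ (b - a)) * g σ :=
    (integral_add_adjacent_intervals (hcont.intervalIntegrable _ _)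
      (hcont.intervalIntegrable _ _)).symm
  have hzero : (∫ σ in c..b, (φ (σ - a) - φ (b - a)) * g σ) = 0 := by
    rcases le_or_gt b (a + ξ) with h | h
    · have hceq : c = b := min_eq_left h
      rw [hceq, integral_same]
    · have hceq : c = a + ξ := min_eq_right h.le
      have heq : EqOn (fun σ => (φ (σ - a) - φ (b - a)) * g σ) (fun _ => (0:ℝ)) (uIcc c b) := by
        intro σ hσ
        rw [uIcc_of_le hcb] at hσ
        have h1 : φ (σ - a) = 1 := hone _ (by have := hσ.1; rw [hceq] at this; linarith)
        have h2 : φ (b - a) = 1 := hone _ (by linarith)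
        simp [h1, h2]
      rw [integral_congr heq]; simp
  have hbound : ∀ σ ∈ uIoc a c, ‖(φ (σ - a) - φ (b - a)) * g σ‖ ≤ M₂ * C := by
    intro σ hσ
    rw [uIoc_of_le hac] at hσ
    have hσa : 0 ≤ σ - a := by have := hσ.1; linarith
    have hσξ : σ - a ≤ ξ := by have := hσ.2; linarith
    set m := min (b - a) ξ with hm
    have hm0 : 0 ≤ m := le_min (by linarith) hξ.le
    have hmξ : m ≤ ξ := min_le_right _ _
    have hφb : φ (b - a) = φ m := by
      rcases le_or_gt (b - a) ξ with h | h
      · rw [hm, min_eq_left h]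
      · rw [hm, min_eq_right h.le, hone _ h.le, hone _ le_rfl]
    have h1 : |φ (σ - a) - φ (b - a)| ≤ M₂ := by
      rw [hφb, abs_sub_comm]
      calc |φ m - φ (σ - a)| ≤ M₂ / ξ * |m - (σ - a)| := hlip _ _
        _ ≤ M₂ / ξ * ξ := by
            have habs : |m - (σ - a)| ≤ ξ := abs_le.mpr ⟨by linarith, by linarith⟩
            exact mul_le_mul_of_nonneg_left habs (by positivity)
        _ = M₂ := div_mul_cancel₀ _ hξ.ne'
    calc ‖(φ (σ - a) - φ (b - a)) * g σ‖ = |φ (σ - a) - φ (b - a)| * |g σ| := by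
          rw [Real.norm_eq_abs, abs_mul]
      _ ≤ M₂ * C := mul_le_mul h1 (hgb σ) (abs_nonneg _) hM₂
  calc |∫ σ in a..b, (φ (σ - a) - φ (b - a)) * g σ|
      = |∫ σ in a..c, (φ (σ - a) - φ (b - a)) * g σ| := by rw [hsplit, hzero, add_zero]
    _ ≤ M₂ * C * |c - a| := norm_integral_le_of_norm_le_const hbound
    _ ≤ M₂ * C * ξ := by
        have : |c - a| ≤ ξ := by rw [abs_of_nonneg (by linarith)]; exact hcξ
        exact mul_le_mul_of_nonneg_left this (by positivity)
    _ = M₂ * ξ * C := by ring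

theorem statement4
    (β : ℝ → ℝ) (hβ : ContDiff ℝ 2 β)
    (hconv : ∀ r, 0 ≤ deriv (deriv β) r)
    (heven : ∀ r, β (-r) = β r) (h0 : β 0 = 0)
    (hsgn : ∀ r : ℝ, 1 ≤ |r| → deriv β r = Real.sign r)
    (M₂ : ℝ) (hM₂ : ∀ r, |deriv (deriv β) r| ≤ M₂)
    (ξ : ℝ) (hξ : 0 < ξ)
    (βξ : ℝ → ℝ) (hβξ : βξ = fun r => ξ * β (r / ξ))
    (hβξ'1 : ∀ s, |deriv βξ s| ≤ 1)
    (hβξsgn : ∀ s : ℝ, ξ ≤ |s| → deriv βξ s = Real.sign s)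
    (F : ℝ → ℝ) (hF : ContDiff ℝ 2 F)
    (CF : ℝ) (hCF : ∀ r, |deriv (deriv F) r| ≤ CF)
    (Fβ : ℝ → ℝ → ℝ)
    (hFβ : Fβ = fun a b => ∫ σ in b..a, deriv βξ (σ - b) * deriv F σ) :
    ∀ u v : ℝ, |deriv (fun w => Fβ u w - Fβ w u) v| ≤ M₂ * ξ * CF := by
  -- basic smoothness facts
  have hβ2 : ContDiff ℝ (1 + 1) β := by exact_mod_cast hβ
  have hβ' : ContDiff ℝ 1 (deriv β) := (contDiff_succ_iff_deriv.mp hβ2).2.2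
  have hβd : Differentiable ℝ β := hβ.differentiable two_ne_zero
  have hβ'd : Differentiable ℝ (deriv β) := hβ'.differentiable one_ne_zero
  have hβ''c : Continuous (deriv (deriv β)) := hβ'.continuous_deriv le_rfl
  have hβ'c : Continuous (deriv β) := hβ'.continuous
  have hF2 : ContDiff ℝ (1 + 1) F := by exact_mod_cast hF
  have hF' : ContDiff ℝ 1 (deriv F) := (contDiff_succ_iff_deriv.mp hF2).2.2
  have hFd : Differentiable ℝ F := hF.differentiable two_ne_zero
  have hF'd : Differentiable ℝ (deriv F) := hF'.differentiable one_ne_zero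
  have hF''c : Continuous (deriv (deriv F)) := hF'.continuous_deriv le_rfl
  have hF'c : Continuous (deriv F) := hF'.continuous
  have hM₂0 : 0 ≤ M₂ := le_trans (abs_nonneg _) (hM₂ 0)
  have hCF0 : 0 ≤ CF := le_trans (abs_nonneg _) (hCF 0)
  -- derivative of βξ
  have hdiv : ∀ s : ℝ, HasDerivAt (fun r : ℝ => r / ξ) (1 / ξ) s := by
    intro s
    simpa using (hasDerivAt_id s).div_const ξ
  have hβξd : ∀ s, HasDerivAt βξ (deriv β (s / ξ)) s := by
    intro s
    rw [hβξ]
    have h2 : HasDerivAt β (deriv β (s / ξ)) (s / ξ) := (hβd (s / ξ)).hasDerivAt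
    have := (h2.comp s (hdiv s)).const_mul ξ
    refine this.congr_deriv ?_
    field_simp
  have hβξ' : deriv βξ = fun s => deriv β (s / ξ) := funext fun s => (hβξd s).deriv
  have hβξ'd : ∀ s, HasDerivAt (deriv βξ) (deriv (deriv β) (s / ξ) / ξ) s := by
    intro s
    rw [hβξ']
    have h2 : HasDerivAt (deriv β) (deriv (deriv β) (s / ξ)) (s / ξ) :=
      (hβ'd (s / ξ)).hasDerivAt
    have := h2.comp s (hdiv s)
    refine this.congr_deriv ?_
    field_simp
  have hβξ'' : deriv (deriv βξ) = fun s => deriv (deriv β) (s / ξ) / ξ :=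
    funext fun s => (hβξ'd s).deriv
  have hβξ'c : Continuous (deriv βξ) := by
    rw [hβξ']; exact hβ'c.comp (continuous_id.div_const ξ)
  have hβξ''c : Continuous (deriv (deriv βξ)) := by
    rw [hβξ'']; exact (hβ''c.comp (continuous_id.div_const ξ)).div_const ξ
  have hβξ''b : ∀ s, |deriv (deriv βξ) s| ≤ M₂ / ξ := by
    intro s
    rw [hβξ'']
    simp only
    rw [abs_div, abs_of_pos hξ]
    gcongr
    exact hM₂ _
  -- oddness
  have hβodd : ∀ r, deriv β (-r) = -deriv β r := by
    intro r
    have hfun : (fun r => β (-r)) = β := funext heven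
    have h := congrArg (fun f : ℝ → ℝ => deriv f r) hfun
    rw [deriv_comp_neg] at h
    linarith
  have hβξodd : ∀ s, deriv βξ (-s) = -deriv βξ s := by
    intro s
    rw [hβξ']
    simp only [neg_div]
    exact hβodd _
  have hβξ'0 : deriv βξ 0 = 0 := by
    have := hβξodd 0
    simp only [neg_zero] at this
    linarith
  have hβξ'dd : ∀ x, HasDerivAt (deriv βξ) (deriv (deriv βξ) x) x := by
    intro x; rw [hβξ'']; exact hβξ'd x
  -- Lipschitz estimate for deriv βξ
  have hlip : ∀ a b : ℝ, |deriv βξ b - deriv βξ a| ≤ M₂ / ξ * |b - a| := by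
    intro a b
    have := Convex.norm_image_sub_le_of_norm_hasDerivWithin_le
      (f := deriv βξ) (f' := fun s => deriv (deriv βξ) s) (C := M₂ / ξ) (s := univ)
      (fun x _ => (hβξ'dd x).hasDerivWithinAt) (fun x _ => hβξ''b x) convex_univ
      (mem_univ a) (mem_univ b)
    simpa [Real.norm_eq_abs] using this
  intro u v
  -- boundedness of deriv F near v
  obtain ⟨C', hC'⟩ := (isCompact_Icc (a := v - 1) (b := v + 1)).exists_bound_of_continuousOn
    hF'c.continuousOn
  have hC'0 : 0 ≤ C' := le_trans (norm_nonneg _) (hC' v ⟨by linarith, by linarith⟩)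
  have hcont : ∀ w : ℝ, Continuous fun σ => deriv βξ (σ - w) * deriv F σ := fun w =>
    (hβξ'c.comp (continuous_id.sub continuous_const)).mul hF'c
  -- derivative of w ↦ Fβ w u
  have h1 : HasDerivAt (fun w => Fβ w u) (deriv βξ (v - u) * deriv F v) v := by
    have heq : (fun w => Fβ w u) = fun w => ∫ σ in u..w, deriv βξ (σ - u) * deriv F σ := by
      funext w; simp only [hFβ]
    rw [heq]
    exact integral_hasDerivAt_right ((hcont u).intervalIntegrable _ _)
      ((hcont u).stronglyMeasurableAtFilter _ _) (hcont u).continuousAt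
  -- derivative of the parametric part
  have hP : HasDerivAt (fun w => ∫ σ in v..u, deriv βξ (σ - w) * deriv F σ)
      (∫ σ in v..u, -(deriv (deriv βξ) (σ - v) * deriv F σ)) v := by
    refine (intervalIntegral.hasDerivAt_integral_of_dominated_loc_of_deriv_le
      (F := fun w σ => deriv βξ (σ - w) * deriv F σ)
      (F' := fun w σ => -(deriv (deriv βξ) (σ - w) * deriv F σ))
      (x₀ := v) (a := v) (b := u) (μ := volume)
      (bound := fun σ => M₂ / ξ * |deriv F σ|) (Metric.ball_mem_nhds v one_pos)
      (Filter.Eventually.of_forall fun w => ((hcont w).aestronglyMeasurable).restrict)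
      ((hcont v).intervalIntegrable _ _)
      ((((hβξ''c.comp (continuous_id.sub continuous_const)).mul hF'c).neg).aestronglyMeasurable.restrict)
      (Filter.Eventually.of_forall fun σ _ => fun x _ => ?_)
      ((continuous_const.mul hF'c.abs).intervalIntegrable _ _)
      (Filter.Eventually.of_forall fun σ _ => fun x _ => ?_)).2
    · rw [Real.norm_eq_abs, abs_neg, abs_mul]
      exact mul_le_mul_of_nonneg_right (hβξ''b _) (abs_nonneg _)
    · have hs : HasDerivAt (fun w : ℝ => σ - w) (-1) x := (hasDerivAt_id x).const_sub σ
      have hcomp := ((hβξ'dd (σ - x)).comp x hs).mul_const (deriv F σ)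
      refine hcomp.congr_deriv ?_
      ring
  -- derivative of the remainder part is 0
  have hR : HasDerivAt (fun w => ∫ σ in v..w, deriv βξ (σ - w) * deriv F σ) 0 v := by
    rw [hasDerivAt_iff_isLittleO]
    have hbig : (fun w => ∫ σ in v..w, deriv βξ (σ - w) * deriv F σ)
        =O[nhds v] fun w => (w - v) ^ 2 := by
      rw [Asymptotics.isBigO_iff]
      refine ⟨M₂ / ξ * C', ?_⟩
      filter_upwards [Metric.ball_mem_nhds v one_pos] with w hw
      have hwv : |w - v| < 1 := by simpa [Real.dist_eq] using hw
      have hb : ∀ σ ∈ uIoc v w, ‖deriv βξ (σ - w) * deriv F σ‖ ≤ M₂ / ξ * |w - v| * C' := by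
        intro σ hσ
        have h1 : |σ - w| ≤ |w - v| := by
          rcases le_total v w with h | h
          · rw [uIoc_of_le h] at hσ
            rw [abs_of_nonpos (by linarith [hσ.2]), abs_of_nonneg (by linarith)]
            linarith [hσ.1]
          · rw [uIoc_of_ge h] at hσ
            rw [abs_of_nonneg (by linarith [hσ.1]), abs_of_nonpos (by linarith)]
            linarith [hσ.2]
        have h2 : |σ - v| ≤ |w - v| := by
          rcases le_total v w with h | h
          · rw [uIoc_of_le h] at hσ
            rw [abs_of_nonneg (by linarith [hσ.1]), abs_of_nonneg (by linarith)]
            linarith [hσ.2]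
          · rw [uIoc_of_ge h] at hσ
            rw [abs_of_nonpos (by linarith [hσ.2]), abs_of_nonpos (by linarith)]
            linarith [hσ.1]
        have hmem : σ ∈ Icc (v - 1) (v + 1) := by
          rw [abs_le] at h2
          constructor <;> nlinarith [abs_nonneg (w - v), hwv.le, h2.1, h2.2]
        have hβb : |deriv βξ (σ - w)| ≤ M₂ / ξ * |w - v| := by
          have h := hlip 0 (σ - w)
          rw [hβξ'0, sub_zero, sub_zero] at h
          refine h.trans (mul_le_mul_of_nonneg_left h1 (by positivity))
        calc ‖deriv βξ (σ - w) * deriv F σ‖ = |deriv βξ (σ - w)| * |deriv F σ| := by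
              rw [Real.norm_eq_abs, abs_mul]
          _ ≤ M₂ / ξ * |w - v| * C' := by
              refine mul_le_mul hβb ?_ (abs_nonneg _) (by positivity)
              have := hC' σ hmem
              rwa [Real.norm_eq_abs] at this
      calc ‖∫ σ in v..w, deriv βξ (σ - w) * deriv F σ‖
          ≤ M₂ / ξ * |w - v| * C' * |w - v| := norm_integral_le_of_norm_le_const hb
        _ = M₂ / ξ * C' * ‖(w - v) ^ 2‖ := by
            rw [Real.norm_eq_abs, abs_pow]; ring
    have hlit : (fun w : ℝ => (w - v) ^ 2) =o[nhds v] fun w => w - v := by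
      have hone : (fun w : ℝ => w - v) =o[nhds v] fun _ => (1 : ℝ) := by
        rw [Asymptotics.isLittleO_one_iff]
        have ht : Filter.Tendsto (fun w : ℝ => w - v) (nhds v) (nhds (v - v)) :=
          (continuous_id.sub continuous_const).tendsto v
        simpa using ht
      have := (Asymptotics.isBigO_refl (fun w : ℝ => w - v) (nhds v)).mul_isLittleO hone
      simpa [pow_two] using this
    have := hbig.trans_isLittleO hlit
    simpa using this
  -- splitting
  have hsplitFβ : (fun w => Fβ u w) = fun w =>
      (∫ σ in v..u, deriv βξ (σ - w) * deriv F σ) - ∫ σ in v..w, deriv βξ (σ - w) * deriv F σ := by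
    funext w
    simp only [hFβ]
    have hadd : (∫ σ in w..v, deriv βξ (σ - w) * deriv F σ)
        + (∫ σ in v..u, deriv βξ (σ - w) * deriv F σ)
        = ∫ σ in w..u, deriv βξ (σ - w) * deriv F σ :=
      integral_add_adjacent_intervals ((hcont w).intervalIntegrable w v)
      ((hcont w).intervalIntegrable v u)
    have hsym : (∫ σ in w..v, deriv βξ (σ - w) * deriv F σ)
        = -∫ σ in v..w, deriv βξ (σ - w) * deriv F σ := integral_symm _ _
    linarith [hadd, hsym]
  have h2 : HasDerivAt (fun w => Fβ u w)
      ((∫ σ in v..u, -(deriv (deriv βξ) (σ - v) * deriv F σ)) - 0) v := by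
    rw [hsplitFβ]; exact hP.sub hR
  have key := h2.sub h1
  have hkeyderiv : deriv (fun w => Fβ u w - Fβ w u) v =
      ((∫ σ in v..u, -(deriv (deriv βξ) (σ - v) * deriv F σ)) - 0)
        - deriv βξ (v - u) * deriv F v := key.deriv
  -- integration by parts
  have hvcont : Continuous fun σ => deriv βξ (σ - v) :=
    hβξ'c.comp (continuous_id.sub continuous_const)
  have hvcont' : Continuous fun σ => deriv (deriv βξ) (σ - v) :=
    hβξ''c.comp (continuous_id.sub continuous_const)
  have ibp : ∫ σ in v..u, deriv F σ * deriv (deriv βξ) (σ - v)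
      = deriv F u * deriv βξ (u - v) - deriv F v * deriv βξ (v - v)
        - ∫ σ in v..u, deriv (deriv F) σ * deriv βξ (σ - v) := by
    refine integral_mul_deriv_eq_deriv_mul (v := fun σ => deriv βξ (σ - v))
      (v' := fun σ => deriv (deriv βξ) (σ - v)) (fun x _ => (hF'd x).hasDerivAt)
      (fun x _ => ?_) (hF''c.intervalIntegrable _ _) (hvcont'.intervalIntegrable _ _)
    have hs : HasDerivAt (fun σ : ℝ => σ - v) 1 x := (hasDerivAt_id x).sub_const v
    have := (hβξ'dd (x - v)).comp x hs
    exact this.congr_deriv (mul_one _)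
  have ftc : (∫ σ in v..u, deriv (deriv F) σ) = deriv F u - deriv F v :=
    integral_deriv_eq_sub (fun x _ => hF'd x) (hF''c.intervalIntegrable _ _)
  have hJ : (∫ σ in v..u, (deriv βξ (σ - v) - deriv βξ (u - v)) * deriv (deriv F) σ)
      = (∫ σ in v..u, deriv βξ (σ - v) * deriv (deriv F) σ)
        - deriv βξ (u - v) * (deriv F u - deriv F v) := by
    have hint1 : IntervalIntegrable (fun σ => deriv βξ (σ - v) * deriv (deriv F) σ) volume v u :=
      (hvcont.mul hF''c).intervalIntegrable _ _
    have hint2 : IntervalIntegrable (fun σ => deriv βξ (u - v) * deriv (deriv F) σ) volume v u :=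
      (continuous_const.mul hF''c).intervalIntegrable _ _
    rw [← ftc]
    simp_rw [sub_mul]
    rw [integral_sub hint1 hint2, intervalIntegral.integral_const_mul]
  have hcomm : (∫ σ in v..u, deriv (deriv βξ) (σ - v) * deriv F σ)
      = ∫ σ in v..u, deriv F σ * deriv (deriv βξ) (σ - v) := by simp_rw [mul_comm]
  have hcomm2 : (∫ σ in v..u, deriv (deriv F) σ * deriv βξ (σ - v))
      = ∫ σ in v..u, deriv βξ (σ - v) * deriv (deriv F) σ := by simp_rw [mul_comm]
  have hoddvu : deriv βξ (v - u) = -deriv βξ (u - v) := by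
    have h := hβξodd (u - v); rw [show -(u - v) = v - u by ring] at h; rw [h]
  have hval : deriv (fun w => Fβ u w - Fβ w u) v
      = ∫ σ in v..u, (deriv βξ (σ - v) - deriv βξ (u - v)) * deriv (deriv F) σ := by
    rw [hkeyderiv, hJ, intervalIntegral.integral_neg, hcomm, ibp, hcomm2, hoddvu, sub_self v, hβξ'0]
    ring
  rw [hval]
  have hone : ∀ s : ℝ, ξ ≤ s → deriv βξ s = 1 := by
    intro s hs
    rw [hβξsgn s (by rw [abs_of_pos (lt_of_lt_of_le hξ hs)]; exact hs)]
    exact Real.sign_of_pos (lt_of_lt_of_le hξ hs)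
  rcases le_total v u with h | h
  · exact core_est (deriv βξ) hβξ'c M₂ ξ CF hξ hM₂0 hCF0 hlip hone
      (deriv (deriv F)) hF''c hCF v u h
  · have hsym : (∫ σ in v..u, (deriv βξ (σ - v) - deriv βξ (u - v)) * deriv (deriv F) σ)
        = -∫ σ in u..v, (deriv βξ (σ - v) - deriv βξ (u - v)) * deriv (deriv F) σ :=
      integral_symm _ _
    rw [hsym, abs_neg]
    have hrefl := integral_comp_sub_left
      (fun σ => (deriv βξ (σ - v) - deriv βξ (u - v)) * deriv (deriv F) σ) (u + v)
      (a := u) (b := v)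
    rw [show u + v - v = u by ring, show u + v - u = v by ring] at hrefl
    have hstep : (∫ σ in u..v, (deriv βξ (σ - v) - deriv βξ (u - v)) * deriv (deriv F) σ)
        = ∫ x in u..v, (deriv βξ (x - u) - deriv βξ (v - u)) * -(deriv (deriv F) (u + v - x)) := by
      rw [← hrefl]
      refine integral_congr fun x _ => ?_
      rw [show u + v - x - v = -(x - u) by ring, show u - v = -(v - u) by ring,
        hβξodd, hβξodd]
      ring
    rw [hstep]
    exact core_est (deriv βξ) hβξ'c M₂ ξ CF hξ hM₂0 hCF0 hlip hone
      (fun x => -(deriv (deriv F) (u + v - x)))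
      ((hF''c.comp (continuous_const.sub continuous_id)).neg)
      (fun x => by rw [abs_neg]; exact hCF _) u v h
end

section
/- Let β_ξ be the smooth convex approximation of the absolute value at scale ξ > 0, with s² β_ξ''(s) ≤ M₂ ξ and β_ξ'' ≤ M₂/ξ for all s. Let 0 < λ* < 1, K ≥ 0, and a, b ∈ ℝ, c ≥ 0 with |b| ≤ λ* |a| + K c. Then for all ρ ∈ [0,1], b² β_ξ''(a + ρb) ≤ 2(1−λ*)^{−2} M₂ ξ + C(K,λ*) c²/ξ, where C(K,λ*) is a constant depending only on K and λ*. -/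
set_option maxHeartbeats 1000000 in
theorem statement14
    (β : ℝ → ℝ) (hβ : ContDiff ℝ 2 β)
    (hconv : ∀ r, 0 ≤ deriv (deriv β) r)
    (heven : ∀ r, β (-r) = β r) (h0 : β 0 = 0)
    (hsgn : ∀ r : ℝ, 1 ≤ |r| → deriv β r = Real.sign r)
    (M₂ : ℝ) (hM₂ : ∀ r, |deriv (deriv β) r| ≤ M₂)
    (ξ : ℝ) (hξ : 0 < ξ)
    (βξ : ℝ → ℝ) (hβξ : βξ = fun r => ξ * β (r / ξ))
    (hresc : ∀ s : ℝ, s ^ 2 * deriv (deriv βξ) s ≤ M₂ * ξ)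
    (hbdd : ∀ s : ℝ, deriv (deriv βξ) s ≤ M₂ / ξ)
    (lam : ℝ) (hlam : 0 < lam) (hlam1 : lam < 1)
    (K : ℝ) (hK : 0 ≤ K) :
    ∃ C > (0 : ℝ), ∀ a b c : ℝ, 0 ≤ c → |b| ≤ lam * |a| + K * c →
      ∀ ρ ∈ Set.Icc (0 : ℝ) 1,
        b ^ 2 * deriv (deriv βξ) (a + ρ * b)
          ≤ 2 * ((1 - lam)⁻¹) ^ 2 * M₂ * ξ + C * c ^ 2 / ξ := by
  have hM2 : 0 ≤ M₂ := (abs_nonneg _).trans (hM₂ 0)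
  have h1l : (0:ℝ) < 1 - lam := by linarith
  have hinv : 0 < (1 - lam)⁻¹ := inv_pos.mpr h1l
  refine ⟨2 * ((1 - lam)⁻¹) ^ 2 * K ^ 2 * M₂ + 1,
    by nlinarith [sq_nonneg ((1 - lam)⁻¹ * K)], ?_⟩
  intro a b c hc hab ρ hρ
  obtain ⟨hρ0, hρ1⟩ := hρ
  have hr := hresc (a + ρ * b)
  have hb2 := hbdd (a + ρ * b)
  obtain ⟨B, hBdef⟩ : ∃ B, deriv (deriv βξ) (a + ρ * b) = B := ⟨_, rfl⟩
  rw [hBdef] at hr hb2 ⊢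
  obtain ⟨s, hs⟩ : ∃ s, a + ρ * b = s := ⟨_, rfl⟩
  rw [hs] at hr
  obtain ⟨inv, hinveq⟩ : ∃ v, (1 - lam)⁻¹ = v := ⟨_, rfl⟩
  rw [hinveq] at hinv ⊢
  have hrhs0 : 0 ≤ 2 * inv ^ 2 * M₂ * ξ + (2 * inv ^ 2 * K ^ 2 * M₂ + 1) * c ^ 2 / ξ := by
    have h1 : 0 ≤ (2 * inv ^ 2 * K ^ 2 * M₂ + 1) * c ^ 2 / ξ := by positivity
    have h2 : 0 ≤ 2 * inv ^ 2 * M₂ * ξ :=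
      mul_nonneg (mul_nonneg (by positivity) hM2) hξ.le
    linarith
  rcases le_or_gt B 0 with hBneg | hBpos
  · have : b ^ 2 * B ≤ 0 := mul_nonpos_of_nonneg_of_nonpos (sq_nonneg b) hBneg
    linarith
  · have ha : |a| ≤ |s| + |b| := by
      have he : a = s - ρ * b := by rw [← hs]; ring
      calc |a| = |s - ρ * b| := by rw [← he]
        _ ≤ |s| + |ρ * b| := abs_sub _ _
        _ ≤ |s| + |b| := by
            have : |ρ * b| ≤ |b| := by
              rw [abs_mul, abs_of_nonneg hρ0]
              nlinarith [abs_nonneg b]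
            linarith
    have h1 : |b| ≤ inv * (|s| + K * c) := by
      rw [← hinveq, le_inv_mul_iff₀ h1l]
      nlinarith [mul_le_mul_of_nonneg_left ha hlam.le, abs_nonneg s]
    have h2 : b ^ 2 ≤ inv ^ 2 * (|s| + K * c) ^ 2 := by
      have := mul_self_le_mul_self (abs_nonneg b) h1
      nlinarith [this, sq_abs b]
    have h3 : (|s| + K * c) ^ 2 ≤ 2 * s ^ 2 + 2 * (K * c) ^ 2 := by
      nlinarith [sq_nonneg (|s| - K * c), sq_abs s]
    have h4 : b ^ 2 ≤ 2 * inv ^ 2 * s ^ 2 + 2 * inv ^ 2 * (K * c) ^ 2 := by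
      calc b ^ 2 ≤ inv ^ 2 * (|s| + K * c) ^ 2 := h2
        _ ≤ inv ^ 2 * (2 * s ^ 2 + 2 * (K * c) ^ 2) :=
            mul_le_mul_of_nonneg_left h3 (sq_nonneg inv)
        _ = 2 * inv ^ 2 * s ^ 2 + 2 * inv ^ 2 * (K * c) ^ 2 := by ring
    have h5 : b ^ 2 * B ≤ (2 * inv ^ 2 * s ^ 2 + 2 * inv ^ 2 * (K * c) ^ 2) * B :=
      mul_le_mul_of_nonneg_right h4 hBpos.le
    have h6 : (2 * inv ^ 2 * s ^ 2 + 2 * inv ^ 2 * (K * c) ^ 2) * B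
        ≤ 2 * inv ^ 2 * (M₂ * ξ) + 2 * inv ^ 2 * (K * c) ^ 2 * (M₂ / ξ) := by
      have e1 := mul_le_mul_of_nonneg_left hr (by positivity : (0:ℝ) ≤ 2 * inv ^ 2)
      have e2 := mul_le_mul_of_nonneg_left hb2
        (by positivity : (0:ℝ) ≤ 2 * inv ^ 2 * (K * c) ^ 2)
      calc (2 * inv ^ 2 * s ^ 2 + 2 * inv ^ 2 * (K * c) ^ 2) * B
          = 2 * inv ^ 2 * (s ^ 2 * B) + 2 * inv ^ 2 * (K * c) ^ 2 * B := by ring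
        _ ≤ 2 * inv ^ 2 * (M₂ * ξ) + 2 * inv ^ 2 * (K * c) ^ 2 * (M₂ / ξ) := by
            linarith [e1, e2]
    have h7 : 2 * inv ^ 2 * (K * c) ^ 2 * (M₂ / ξ)
        ≤ (2 * inv ^ 2 * K ^ 2 * M₂ + 1) * c ^ 2 / ξ := by
      have e : 2 * inv ^ 2 * (K * c) ^ 2 * (M₂ / ξ)
          = (2 * inv ^ 2 * K ^ 2 * M₂ * c ^ 2) / ξ := by ring
      rw [e]
      gcongr
      nlinarith [sq_nonneg c]
    linarith
end
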